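/- arXiv:2405.04301 — 3 statements merged into one kernel-verified Lean document; each statement's English description precedes it below -/
import Mathlib

section
/- Let p, q be real numbers with p ≥ -1 and q ≤ 1, at least one of these two inequalities being strict, and let γ > 0. Then every smooth positive 2π-periodic function φ : ℝ → ℝ satisfying φ^{-p} ( φ'²/(2φ) + (φ + φ^{-1})/2 )^{q-1} ( φ'' - φ'²/(2φ) + (φ - φ^{-1})/2 ) = γ on ℝ is constant: φ(θ) ≡ c, where c > 0 satisfies c^{-p}((c + c^{-1})/2)^{q-1}((c - c^{-1})/2) = γ. -/
open Real

open MeasureTheory intervalIntegral Set AddCircle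

section Aux


lemma parseval_aux (hab : (0:ℝ) < 0 + 2*π) (h : ℝ → ℝ) (hcont : Continuous h)
    (hper : h 0 = h (0 + 2*π)) :
    Summable (fun n : ℤ => ‖fourierCoeffOn hab (fun x => (h x : ℂ)) n‖ ^ 2) ∧
    ∑' n : ℤ, ‖fourierCoeffOn hab (fun x => (h x : ℂ)) n‖ ^ 2
      = (1/(2*π)) * ∫ x in (0:ℝ)..(2*π), h x ^ 2 := by
  have hπ : (0:ℝ) < 2 * π := by positivity
  haveI hT : Fact (0 < 2 * π) := ⟨hπ⟩
  set H : ℝ → ℂ := fun x => (h x : ℂ) with hH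
  have hHc : Continuous H := Complex.continuous_ofReal.comp hcont
  have hHper : H 0 = H (0 + 2*π) := by
    show (h 0 : ℂ) = (h (0 + 2*π) : ℂ)
    exact_mod_cast hper
  set G : C(AddCircle (2*π), ℂ) :=
    ⟨AddCircle.liftIco (2*π) 0 H, AddCircle.liftIco_zero_continuous
      (by simpa using hHper) hHc.continuousOn⟩ with hG
  have hGn : ∀ n : ℤ, fourierCoeff (⇑G) n = fourierCoeffOn hab H n := by
    intro n
    exact fourierCoeff_liftIco_eq (T := 2*π) H n
  set Gl : Lp ℂ 2 (@haarAddCircle (2*π) _) := ContinuousMap.toLp 2 haarAddCircle ℂ G with hGl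
  have hGln : ∀ n : ℤ, fourierCoeff (⇑Gl) n = fourierCoeffOn hab H n := by
    intro n; rw [fourierCoeff_toLp, hGn]
  have P := tsum_sq_fourierCoeff Gl
  -- identify RHS with interval integral
  have hR1 : ∫ t : AddCircle (2*π), ‖Gl t‖ ^ 2 ∂haarAddCircle
      = ∫ t : AddCircle (2*π), ‖G t‖ ^ 2 ∂haarAddCircle := by
    apply MeasureTheory.integral_congr_ae
    filter_upwards [ContinuousMap.coeFn_toLp (p := 2) (𝕜 := ℂ) haarAddCircle G] with t ht
    rw [ht]
  have hR2 : ∫ t : AddCircle (2*π), ‖G t‖ ^ 2 ∂(volume : Measure (AddCircle (2*π)))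
      = (2*π) * ∫ t : AddCircle (2*π), ‖G t‖ ^ 2 ∂haarAddCircle := by
    rw [volume_eq_smul_haarAddCircle, MeasureTheory.integral_smul_measure, ENNReal.toReal_ofReal hπ.le,
      smul_eq_mul]
  have hR3 : ∫ x in (0:ℝ)..(0+2*π), ‖G (x : AddCircle (2*π))‖ ^ 2
      = ∫ t : AddCircle (2*π), ‖G t‖ ^ 2 ∂(volume : Measure (AddCircle (2*π))) :=
    AddCircle.intervalIntegral_preimage (2*π) 0 (fun t => ‖G t‖^2)
  have hR4 : ∫ x in (0:ℝ)..(0+2*π), ‖G (x : AddCircle (2*π))‖ ^ 2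
      = ∫ x in (0:ℝ)..(0+2*π), h x ^ 2 := by
    apply intervalIntegral.integral_congr_ae
    have hne : ∀ᵐ x : ℝ, x ≠ 0 + 2*π :=
      (Set.countable_singleton ((0:ℝ)+2*π)).ae_notMem (μ := volume)
    filter_upwards [hne] with x hx hmem
    rw [Set.uIoc_of_le (by linarith : (0:ℝ) ≤ 0 + 2*π)] at hmem
    have hx' : x ∈ Set.Ico (0:ℝ) (0 + 2*π) := ⟨hmem.1.le, lt_of_le_of_ne hmem.2 hx⟩
    have : G (x : AddCircle (2*π)) = H x := AddCircle.liftIco_coe_apply (f := H) hx'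
    rw [this, hH]
    simp [sq_abs, Complex.norm_real]
  -- summability
  have hsum : Summable (fun n : ℤ => ‖fourierCoeffOn hab H n‖ ^ 2) := by
    have hm := (lp.memℓp (fourierBasis.repr Gl)).summable
      (by norm_num : (0:ℝ) < (2:ENNReal).toReal)
    have : ∀ n : ℤ, ‖(fourierBasis.repr Gl) n‖ ^ (2:ENNReal).toReal
        = ‖fourierCoeffOn hab H n‖ ^ 2 := by
      intro n
      rw [fourierBasis_repr, hGln]
      norm_num [Real.rpow_natCast]
    exact (summable_congr this).mp hm
  constructor
  · exact hsum
  · calc ∑' n : ℤ, ‖fourierCoeffOn hab H n‖ ^ 2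
        = ∑' n : ℤ, ‖fourierCoeff (⇑Gl) n‖ ^ 2 := by
          congr 1; ext n; rw [hGln]
      _ = ∫ t : AddCircle (2*π), ‖Gl t‖ ^ 2 ∂haarAddCircle := P
      _ = (1/(2*π)) * ∫ x in (0:ℝ)..(2*π), h x ^ 2 := by
          rw [hR1]
          have hz : (0:ℝ) + 2*π = 2*π := by ring
          rw [hz] at hR4 hR3
          rw [← hR4, hR3, hR2]
          field_simp

lemma wirtinger (f : ℝ → ℝ) (hf : ContDiff ℝ (⊤ : ℕ∞) f)
    (hper : ∀ x, f (x + 2 * π) = f x)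
    (hmean : ∫ x in (0:ℝ)..(2*π), f x = 0) :
    ∫ x in (0:ℝ)..(2*π), f x ^ 2 ≤ ∫ x in (0:ℝ)..(2*π), (deriv f x) ^ 2 := by
  have hπ : (0:ℝ) < 2 * π := by positivity
  haveI hT : Fact (0 < 2 * π) := ⟨hπ⟩
  have hab : (0:ℝ) < 0 + 2 * π := by linarith
  set F : ℝ → ℂ := fun x => (f x : ℂ) with hF
  set F' : ℝ → ℂ := fun x => ((deriv f x : ℝ) : ℂ) with hF'
  have hdiff : Differentiable ℝ f := hf.differentiable (by simp)
  have hderiv : ∀ x, HasDerivAt F (F' x) x := fun x =>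
    ((hdiff x).hasDerivAt).ofReal_comp
  have hFc : Continuous F := Complex.continuous_ofReal.comp hf.continuous
  have hF'c : Continuous F' := Complex.continuous_ofReal.comp (hf.continuous_deriv (by exact_mod_cast le_top))
  set c : ℤ → ℂ := fun n => fourierCoeffOn hab F n with hc
  set d : ℤ → ℂ := fun n => fourierCoeffOn hab F' n with hd
  have hF2π : F (0 + 2*π) = F 0 := by
    simp only [hF, zero_add]
    norm_cast
    simpa using hper 0
  -- coefficient comparison
  have hcd : ∀ n : ℤ, ‖c n‖ ≤ ‖d n‖ := by
    intro n
    rcases eq_or_ne n 0 with rfl | hn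
    · have : c 0 = 0 := by
        show fourierCoeffOn hab F 0 = 0
        rw [fourierCoeffOn_eq_integral]
        simp only [neg_zero, fourier_zero, one_smul, zero_add, hF]
        rw [intervalIntegral.integral_ofReal, hmean]
        simp
      simp [this]
    · have key := fourierCoeffOn_of_hasDerivAt hab hn (fun x _ => hderiv x)
        (hF'c.intervalIntegrable _ _)
      have hsub : F (0 + 2*π) - F 0 = 0 := by rw [hF2π, sub_self]
      rw [hsub] at key
      have : c n = (1 / (Complex.I * n)) * d n := by
        show fourierCoeffOn hab F n = 1 / (Complex.I * n) * d n
        rw [key]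
        show _ = 1 / (Complex.I * n) * fourierCoeffOn hab F' n
        have hn' : (n : ℂ) ≠ 0 := Int.cast_ne_zero.mpr hn
        have hπ' : (π : ℂ) ≠ 0 := Complex.ofReal_ne_zero.mpr Real.pi_ne_zero
        field_simp
        push_cast
        ring
      rw [this, norm_mul, norm_div, norm_one, norm_mul, Complex.norm_I, one_mul]
      have h1 : (1:ℝ) ≤ ‖(n:ℂ)‖ := by
        rw [Complex.norm_intCast]
        exact_mod_cast Int.one_le_abs hn
      calc 1 / ‖(n:ℂ)‖ * ‖d n‖ ≤ 1 * ‖d n‖ := by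
            apply mul_le_mul_of_nonneg_right _ (norm_nonneg _)
            rw [div_le_one (by linarith)]; exact h1
        _ = ‖d n‖ := one_mul _
  -- Parseval for F
  have hperf : f 0 = f (0 + 2*π) := (hper 0).symm
  have hperd : deriv f 0 = deriv f (0 + 2*π) := by
    have : (fun y => f (y + 2*π)) = f := funext hper
    have h2 : deriv (fun y => f (y + 2*π)) 0 = deriv f (0 + 2*π) :=
      deriv_comp_add_const f (2*π) 0
    rw [this] at h2
    exact h2
  have hPF : ∑' n : ℤ, ‖c n‖ ^ 2 = (1/(2*π)) * ∫ x in (0:ℝ)..(2*π), f x ^ 2 :=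
    (parseval_aux hab f hf.continuous hperf).2
  have hPF' : ∑' n : ℤ, ‖d n‖ ^ 2 = (1/(2*π)) * ∫ x in (0:ℝ)..(2*π), (deriv f x) ^ 2 :=
    (parseval_aux hab (deriv f) (hf.continuous_deriv (by exact_mod_cast le_top)) hperd).2
  have sd : Summable (fun n : ℤ => ‖d n‖ ^ 2) :=
    (parseval_aux hab (deriv f) (hf.continuous_deriv (by exact_mod_cast le_top)) hperd).1
  have sc : Summable (fun n : ℤ => ‖c n‖ ^ 2) :=
    sd.of_nonneg_of_le (fun n => by positivity)
      (fun n => pow_le_pow_left₀ (norm_nonneg _) (hcd n) 2)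
  have : ∑' n : ℤ, ‖c n‖ ^ 2 ≤ ∑' n : ℤ, ‖d n‖ ^ 2 :=
    Summable.tsum_le_tsum (fun n => pow_le_pow_left₀ (norm_nonneg _) (hcd n) 2) sc sd
  rw [hPF, hPF'] at this
  have h2π : (0:ℝ) < 1/(2*π) := by positivity
  nlinarith [this]

end Aux

/-- A solution to the isotropic horospherical `q`-weighted `p`-Minkowski problem in the
hyperbolic plane: a smooth positive `2π`-periodic function `φ : ℝ → ℝ` satisfying
`φ^{-p} (φ'²/(2φ) + (φ + φ⁻¹)/2)^{q-1} (φ'' - φ'²/(2φ) + (φ - φ⁻¹)/2) = γ`. -/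
def IsSolutionQ (p q γ : ℝ) (φ : ℝ → ℝ) : Prop :=
  ContDiff ℝ (⊤ : ℕ∞) φ ∧ (∀ θ, 0 < φ θ) ∧ (∀ θ, φ (θ + 2 * π) = φ θ) ∧
  ∀ θ, φ θ ^ (-p) *
    ((deriv φ θ) ^ 2 / (2 * φ θ) + (φ θ + (φ θ)⁻¹) / 2) ^ (q - 1) *
    (deriv (deriv φ) θ - (deriv φ θ) ^ 2 / (2 * φ θ) + (φ θ - (φ θ)⁻¹) / 2) = γ

theorem stmt_3 (p q γ : ℝ) (hp : -1 ≤ p) (hq : q ≤ 1) (hstrict : -1 < p ∨ q < 1)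
    (hγ : 0 < γ) (φ : ℝ → ℝ) (hφ : IsSolutionQ p q γ φ) :
    ∃ c : ℝ, 0 < c ∧
      c ^ (-p) * ((c + c⁻¹) / 2) ^ (q - 1) * ((c - c⁻¹) / 2) = γ ∧
      ∀ θ, φ θ = c := by
  obtain ⟨hsm, hpos, hper, heq⟩ := hφ
  have hπ : (0:ℝ) < 2 * π := by positivity
  have htop : ((1:ℕ∞) ≤ (⊤:ℕ∞)) := le_top
  have hdiff : Differentiable ℝ φ := hsm.differentiable (by simp)
  set ψ : ℝ → ℝ := deriv φ with hψdef
  have hsmψ : ContDiff ℝ (⊤:ℕ∞) ψ := (contDiff_infty_iff_deriv.mp hsm).2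
  have hdiffψ : Differentiable ℝ ψ := hsmψ.differentiable (by simp)
  set W : ℝ → ℝ := fun θ => (ψ θ)^2/(2*φ θ) + (φ θ + (φ θ)⁻¹)/2 with hWdef
  have hWpos : ∀ θ, 0 < W θ := by
    intro θ
    have ha := hpos θ
    have h1 : 0 ≤ (ψ θ)^2/(2*φ θ) := div_nonneg (sq_nonneg _) (by linarith)
    have h2 : 0 < (φ θ)⁻¹ := inv_pos.mpr ha
    have : 0 < (φ θ + (φ θ)⁻¹)/2 := by linarith
    show 0 < (ψ θ)^2/(2*φ θ) + (φ θ + (φ θ)⁻¹)/2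
    linarith
  have hφ' : ∀ θ, HasDerivAt φ (ψ θ) θ := fun θ => (hdiff θ).hasDerivAt
  have hψ' : ∀ θ, HasDerivAt ψ (deriv ψ θ) θ := fun θ => (hdiffψ θ).hasDerivAt
  -- the equation, solved for deriv ψ
  have hE : ∀ θ, deriv ψ θ = γ * (φ θ)^p * (W θ)^(1-q) + W θ - φ θ := by
    intro θ
    have h := heq θ
    have ha := hpos θ
    have hb := hWpos θ
    have hWθ : (ψ θ)^2/(2*φ θ) + (φ θ + (φ θ)⁻¹)/2 = W θ := rfl
    rw [hWθ] at h
    rw [Real.rpow_neg ha.le] at h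
    rw [show q - 1 = -(1-q) by ring, Real.rpow_neg hb.le] at h
    have hA : 0 < (φ θ)^p := Real.rpow_pos_of_pos ha p
    have hB : 0 < (W θ)^(1-q) := Real.rpow_pos_of_pos hb (1-q)
    have hX : deriv ψ θ - (ψ θ)^2/(2*φ θ) + (φ θ - (φ θ)⁻¹)/2
        = γ * (φ θ)^p * (W θ)^(1-q) := by
      field_simp at h ⊢
      linear_combination h
    have hW2 : (ψ θ)^2/(2*φ θ) = W θ - (φ θ + (φ θ)⁻¹)/2 := by
      rw [← hWθ]; ring
    rw [hW2] at hX
    linear_combination hX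
  -- derivative of W
  have hWd : ∀ θ, HasDerivAt W (γ * (φ θ)^(p-1) * ψ θ * (W θ)^(1-q)) θ := by
    intro θ
    have ha := hpos θ
    have h2φ : (2:ℝ) * φ θ ≠ 0 := by positivity
    have h1 : HasDerivAt (fun x => (ψ x)^2) (2 * ψ θ * deriv ψ θ) θ := by
      simpa using (hψ' θ).fun_pow 2
    have h2 : HasDerivAt (fun x => 2 * φ x) (2 * ψ θ) θ := (hφ' θ).const_mul 2
    have h3 := h1.div h2 h2φ
    have h4 : HasDerivAt (fun x => (φ x)⁻¹) (-(ψ θ) / (φ θ)^2) θ := (hφ' θ).inv ha.ne'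
    have h5 := ((hφ' θ).add h4).div_const 2
    have h6 := h3.add h5
    refine h6.congr_deriv (Eq.symm ?_)
    have hA1 : (φ θ)^(p-1) = (φ θ)^p / φ θ := by
      rw [Real.rpow_sub ha, Real.rpow_one]
    have hWθ : W θ = (ψ θ)^2/(2*φ θ) + (φ θ + (φ θ)⁻¹)/2 := rfl
    rw [hE θ, hA1, hWθ]
    field_simp
    ring
  -- the coefficient g
  set g : ℝ → ℝ := fun θ =>
    (1+p) * (γ * (φ θ)^p * (W θ)^(1-q) / φ θ)
      + (1-q) * (γ * (φ θ)^p * (W θ)^(1-q))^2 / (φ θ * W θ) with hgdef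
  have hgpos : ∀ θ, 0 < g θ := by
    intro θ
    have ha := hpos θ
    have hb := hWpos θ
    have hA : 0 < (φ θ)^p := Real.rpow_pos_of_pos ha p
    have hB : 0 < (W θ)^(1-q) := Real.rpow_pos_of_pos hb (1-q)
    have ht1 : 0 < γ * (φ θ)^p * (W θ)^(1-q) / φ θ := by positivity
    have ht2 : 0 < (γ * (φ θ)^p * (W θ)^(1-q))^2 / (φ θ * W θ) := by positivity
    show 0 < (1+p) * (γ * (φ θ)^p * (W θ)^(1-q) / φ θ)
      + (1-q) * (γ * (φ θ)^p * (W θ)^(1-q))^2 / (φ θ * W θ)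
    have e2 : (1-q) * (γ * (φ θ)^p * (W θ)^(1-q))^2 / (φ θ * W θ)
        = (1-q) * ((γ * (φ θ)^p * (W θ)^(1-q))^2 / (φ θ * W θ)) := by ring
    rw [e2]
    rcases hstrict with hs | hs
    · have h1 : 0 < (1+p) * (γ * (φ θ)^p * (W θ)^(1-q) / φ θ) :=
        mul_pos (by linarith) ht1
      have h2 : 0 ≤ (1-q) * ((γ * (φ θ)^p * (W θ)^(1-q))^2 / (φ θ * W θ)) :=
        mul_nonneg (by linarith) ht2.le
      linarith
    · have h1 : 0 ≤ (1+p) * (γ * (φ θ)^p * (W θ)^(1-q) / φ θ) :=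
        mul_nonneg (by linarith) ht1.le
      have h2 : 0 < (1-q) * ((γ * (φ θ)^p * (W θ)^(1-q))^2 / (φ θ * W θ)) :=
        mul_pos (by linarith) ht2
      linarith
  have hφc : Continuous φ := hsm.continuous
  have hψc : Continuous ψ := hsmψ.continuous
  have hWc : Continuous W := by
    apply Continuous.add
    · exact (hψc.pow 2).div (continuous_const.mul hφc)
        (fun x => by have := hpos x; positivity)
    · exact (hφc.add (hφc.inv₀ fun x => (hpos x).ne')).div_const 2
  have hAc : Continuous fun θ => (φ θ)^p :=
    hφc.rpow_const fun x => Or.inl (hpos x).ne'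
  have hBc : Continuous fun θ => (W θ)^(1-q) :=
    hWc.rpow_const fun x => Or.inl (hWpos x).ne'
  have hgcont : Continuous g := by
    apply Continuous.add
    · apply Continuous.mul continuous_const
      exact (continuous_const.mul hAc |>.mul hBc).div hφc fun x => (hpos x).ne'
    · exact (continuous_const.mul ((continuous_const.mul hAc |>.mul hBc).pow 2)).div
        (hφc.mul hWc) fun x => by have h1 := hpos x; have h2 := hWpos x; positivity
  -- second derivative of ψ
  have hψ'' : ∀ θ, HasDerivAt (deriv ψ) (g θ * ψ θ - ψ θ) θ := by
    intro θ
    have ha := hpos θ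
    have hb := hWpos θ
    have hA : HasDerivAt (fun x => (φ x)^p) (ψ θ * p * (φ θ)^(p-1)) θ :=
      (hφ' θ).rpow_const (Or.inl ha.ne')
    have hB : HasDerivAt (fun x => (W x)^(1-q))
        ((γ * (φ θ)^(p-1) * ψ θ * (W θ)^(1-q)) * (1-q) * (W θ)^(1-q-1)) θ :=
      (hWd θ).rpow_const (Or.inl hb.ne')
    have hγA : HasDerivAt (fun x => γ * (φ x)^p) (γ * (ψ θ * p * (φ θ)^(p-1))) θ :=
      hA.const_mul γ
    have htot := ((hγA.mul hB).add (hWd θ)).sub (hφ' θ)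
    have hfun : deriv ψ = fun θ => γ * (φ θ)^p * (W θ)^(1-q) + W θ - φ θ := funext hE
    rw [hfun]
    refine htot.congr_deriv (Eq.symm ?_)
    have hA1 : (φ θ)^(p-1) = (φ θ)^p / φ θ := by rw [Real.rpow_sub ha, Real.rpow_one]
    have hB1 : (W θ)^(1-q-1) = (W θ)^(1-q) / W θ := by rw [Real.rpow_sub hb, Real.rpow_one]
    show ((1+p) * (γ * (φ θ)^p * (W θ)^(1-q) / φ θ)
      + (1-q) * (γ * (φ θ)^p * (W θ)^(1-q))^2 / (φ θ * W θ)) * ψ θ - ψ θ = _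
    rw [hA1, hB1]
    field_simp
    ring
  -- periodicity
  have hψper : ∀ θ, ψ (θ + 2*π) = ψ θ := by
    intro θ
    have h1 : (fun y => φ (y + 2*π)) = φ := funext hper
    have h2 : deriv (fun y => φ (y + 2*π)) θ = deriv φ (θ + 2*π) :=
      deriv_comp_add_const φ (2*π) θ
    rw [h1] at h2
    exact h2.symm
  have hψ'per : ∀ θ, deriv ψ (θ + 2*π) = deriv ψ θ := by
    intro θ
    have h1 : (fun y => ψ (y + 2*π)) = ψ := funext hψper
    have h2 : deriv (fun y => ψ (y + 2*π)) θ = deriv ψ (θ + 2*π) :=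
      deriv_comp_add_const ψ (2*π) θ
    rw [h1] at h2
    exact h2.symm
  -- ψ vanishes identically
  have hψ0 : ∀ θ, ψ θ = 0 := by
    have hψ'c : Continuous (deriv ψ) := hsmψ.continuous_deriv (by exact_mod_cast htop)
    have hu : ∀ x, HasDerivAt (fun y => ψ y * deriv ψ y)
        (deriv ψ x * deriv ψ x + ψ x * (g x * ψ x - ψ x)) x :=
      fun x => (hψ' x).mul (hψ'' x)
    have hint : IntervalIntegrable
        (fun x => deriv ψ x * deriv ψ x + ψ x * (g x * ψ x - ψ x)) volume 0 (2*π) :=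
      ((hψ'c.mul hψ'c).add (hψc.mul ((hgcont.mul hψc).sub hψc))).intervalIntegrable _ _
    have hI0 : ∫ x in (0:ℝ)..(2*π), (deriv ψ x * deriv ψ x + ψ x * (g x * ψ x - ψ x))
        = ψ (2*π) * deriv ψ (2*π) - ψ 0 * deriv ψ 0 :=
      intervalIntegral.integral_eq_sub_of_hasDerivAt (fun x _ => hu x) hint
    have hper0 : ψ (2*π) * deriv ψ (2*π) = ψ 0 * deriv ψ 0 := by
      have e : (2*π) = 0 + 2*π := by ring
      rw [e, hψper 0, hψ'per 0]
    rw [hper0, sub_self] at hI0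
    have i1 : IntervalIntegrable (fun x => ψ x ^2) volume 0 (2*π) :=
      (hψc.pow 2).intervalIntegrable _ _
    have i2 : IntervalIntegrable (fun x => deriv ψ x ^2) volume 0 (2*π) :=
      (hψ'c.pow 2).intervalIntegrable _ _
    have i3 : IntervalIntegrable (fun x => g x * ψ x ^2) volume 0 (2*π) :=
      (hgcont.mul (hψc.pow 2)).intervalIntegrable _ _
    have hsplit : ∫ x in (0:ℝ)..(2*π), (deriv ψ x * deriv ψ x + ψ x * (g x * ψ x - ψ x))
        = (∫ x in (0:ℝ)..(2*π), deriv ψ x ^2)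
          + ((∫ x in (0:ℝ)..(2*π), g x * ψ x^2) - ∫ x in (0:ℝ)..(2*π), ψ x^2) := by
      rw [← intervalIntegral.integral_sub i3 i1, ← intervalIntegral.integral_add i2 (i3.sub i1)]
      apply intervalIntegral.integral_congr
      intro x _
      ring
    have hmean : ∫ x in (0:ℝ)..(2*π), ψ x = 0 := by
      have h := intervalIntegral.integral_eq_sub_of_hasDerivAt
        (fun x (_ : x ∈ Set.uIcc (0:ℝ) (2*π)) => hφ' x) (hψc.intervalIntegrable _ _)
      rw [h]
      have e : (2*π) = 0 + 2*π := by ring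
      rw [e, hper 0, sub_self]
    have hwirt := wirtinger ψ hsmψ hψper hmean
    have hnonneg : 0 ≤ ∫ x in (0:ℝ)..(2*π), g x * ψ x^2 :=
      intervalIntegral.integral_nonneg (by linarith)
        (fun x _ => mul_nonneg (hgpos x).le (sq_nonneg _))
    have hI3 : ∫ x in (0:ℝ)..(2*π), g x * ψ x^2 = 0 := by
      rw [hsplit] at hI0; linarith
    intro θ
    by_contra hne
    obtain ⟨θ₁, hθ₁, hθeq⟩ :=
      Function.Periodic.exists_mem_Ioc (f := ψ) (c := 2*π) hψper hπ θ 0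
    have hθ1ne : ψ θ₁ ≠ 0 := by rw [← hθeq]; exact hne
    have hθ1le : θ₁ ≤ 2*π := by have h2 := hθ₁.2; rw [zero_add] at h2; exact h2
    have hpos1 : 0 < ∫ x in (0:ℝ)..(2*π), g x * ψ x^2 := by
      apply intervalIntegral.integral_pos hπ ((hgcont.mul (hψc.pow 2)).continuousOn)
        (fun x _ => mul_nonneg (hgpos x).le (sq_nonneg _))
      refine ⟨θ₁, ⟨hθ₁.1.le, hθ1le⟩, mul_pos (hgpos θ₁) ?_⟩
      exact lt_of_le_of_ne (sq_nonneg _) (Ne.symm (pow_ne_zero 2 hθ1ne))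
    linarith
  -- conclude
  have hconst : ∀ θ, φ θ = φ 0 := by
    intro θ
    exact is_const_of_deriv_eq_zero hdiff hψ0 θ 0
  refine ⟨φ 0, hpos 0, ?_, hconst⟩
  have h0 := heq 0
  have hψfun : ψ = fun _ => (0:ℝ) := funext hψ0
  have hψ'0 : deriv ψ 0 = 0 := by rw [hψfun]; simp
  rw [hψ0 0, hψ'0] at h0
  simpa using h0
end

section
/- Let δ > 0, let u₀ ∈ ℝ, and let f : (u₀ - δ, u₀ + δ) → ℝ be a smooth function with f(u₀) = f'(u₀) = 0 and f''(u₀) = -2a < 0. Suppose u₁, u₂ are functions defined for all sufficiently small c > 0 with u₁(c) < u₀ < u₂(c), f(u₁(c)) + c = 0 = f(u₂(c)) + c, and f(u) + c > 0 for u ∈ (u₁(c), u₂(c)). Then lim_{c → 0⁺} ∫_{u₁(c)}^{u₂(c)} du / √(f(u) + c) = π / √a. -/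
open Real Filter MeasureTheory intervalIntegral Set

lemma inv_sqrt_eq_rpow (t : ℝ) : (Real.sqrt t)⁻¹ = t ^ (-(1/2) : ℝ) := by
  rcases lt_trichotomy t 0 with h | h | h
  · rw [Real.sqrt_eq_zero_of_nonpos h.le, Real.rpow_def_of_neg h]
    rw [show (-(1/2):ℝ) * π = -(π/2) by ring, Real.cos_neg, Real.cos_pi_div_two]
    simp
  · simp [h]
  · rw [Real.rpow_neg h.le, Real.sqrt_eq_rpow]

lemma model_hasDerivAt {p q u : ℝ} (hpq : p < q) (hu : u ∈ Set.Ioo p q) :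
    HasDerivAt (fun v => Real.arcsin ((2*v - p - q)/(q - p)))
      ((Real.sqrt ((q - u)*(u - p)))⁻¹) u := by
  have hqp : (0:ℝ) < q - p := sub_pos.2 hpq
  have hx1 : (2*u - p - q)/(q - p) ≠ -1 := by
    intro hcon
    rw [div_eq_iff hqp.ne'] at hcon
    nlinarith [hu.1, hu.2]
  have hx2 : (2*u - p - q)/(q - p) ≠ 1 := by
    intro hcon
    rw [div_eq_iff hqp.ne'] at hcon
    nlinarith [hu.1, hu.2]
  have hinner : HasDerivAt (fun v : ℝ => (2*v - p - q)/(q - p)) (2/(q - p)) u := by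
    have h1 : HasDerivAt (fun v : ℝ => 2*v - p - q) 2 u := by
      simpa using (((hasDerivAt_id u).const_mul (2:ℝ)).sub_const p).sub_const q
    simpa using h1.div_const (q - p)
  have harc := (Real.hasDerivAt_arcsin hx1 hx2).comp u hinner
  refine harc.congr_deriv ?_
  have hA : (0:ℝ) < q - u := sub_pos.2 hu.2
  have hB : (0:ℝ) < u - p := sub_pos.2 hu.1
  have key : 1 - ((2*u - p - q)/(q - p))^2 = 4*((q - u)*(u - p))/(q - p)^2 := by
    field_simp
    ring
  rw [key]
  rw [show (4:ℝ)*((q - u)*(u - p))/(q - p)^2 = (2/(q-p))^2 * ((q - u)*(u - p)) by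
    field_simp; ring]
  rw [show Real.sqrt ((2/(q-p))^2 * ((q - u)*(u - p)))
      = (2/(q-p)) * Real.sqrt ((q - u)*(u - p)) from by
    rw [Real.sqrt_mul (sq_nonneg _), Real.sqrt_sq (by positivity)]]
  have hs : (0:ℝ) < Real.sqrt ((q - u)*(u - p)) := Real.sqrt_pos.2 (by positivity)
  field_simp

lemma model_integrable {p q : ℝ} (hpq : p < q) :
    IntervalIntegrable (fun u => (Real.sqrt ((q - u)*(u - p)))⁻¹) volume p q := by
  have hqp : (0:ℝ) < q - p := sub_pos.2 hpq
  set m := (p + q)/2 with hm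
  have hpm : p < m := by rw [hm]; linarith
  have hmq : m < q := by rw [hm]; linarith
  have hmeas : Measurable fun u : ℝ => (Real.sqrt ((q - u)*(u - p)))⁻¹ :=
    (Real.continuous_sqrt.comp ((continuous_const.sub continuous_id).mul
      (continuous_id.sub continuous_const))).measurable.inv
  have hrpow : IntervalIntegrable (fun x : ℝ => x ^ (-(1/2) : ℝ)) volume 0 (m - p) :=
    intervalIntegral.intervalIntegrable_rpow' (by norm_num)
  -- left piece
  have hleft : IntervalIntegrable (fun u => (Real.sqrt ((q - u)*(u - p)))⁻¹) volume p m := by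
    have hg0 : IntervalIntegrable (fun x : ℝ => (x - p) ^ (-(1/2) : ℝ)) volume p m := by
      have := hrpow.comp_sub_right p
      simpa using this
    have hg : IntervalIntegrable
        (fun x : ℝ => (Real.sqrt ((q - p)/2))⁻¹ * (x - p) ^ (-(1/2) : ℝ)) volume p m :=
      hg0.const_mul _
    refine hg.mono_fun' hmeas.aestronglyMeasurable ?_
    rw [Set.uIoc_of_le hpm.le]
    refine (MeasureTheory.ae_restrict_iff' measurableSet_Ioc).2 (Filter.Eventually.of_forall ?_)
    intro x hx
    have hxp : 0 < x - p := sub_pos.2 hx.1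
    have hqx : (q - p)/2 ≤ q - x := by
      have : x ≤ m := hx.2
      rw [hm] at this; linarith
    have h1 : ((q - p)/2) * (x - p) ≤ (q - x) * (x - p) :=
      mul_le_mul_of_nonneg_right hqx hxp.le
    have h2 : Real.sqrt (((q - p)/2) * (x - p)) ≤ Real.sqrt ((q - x)*(x - p)) :=
      Real.sqrt_le_sqrt h1
    have h3 : (0:ℝ) < Real.sqrt (((q - p)/2) * (x - p)) := Real.sqrt_pos.2 (by positivity)
    have h4 : (Real.sqrt ((q - x)*(x - p)))⁻¹ ≤ (Real.sqrt (((q - p)/2) * (x - p)))⁻¹ :=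
      inv_anti₀ h3 h2
    have h5 : Real.sqrt (((q - p)/2) * (x - p)) = Real.sqrt ((q - p)/2) * Real.sqrt (x - p) :=
      Real.sqrt_mul (by positivity) _
    calc ‖(Real.sqrt ((q - x)*(x - p)))⁻¹‖
        = (Real.sqrt ((q - x)*(x - p)))⁻¹ := by
          rw [Real.norm_eq_abs, abs_of_nonneg (by positivity)]
      _ ≤ (Real.sqrt (((q - p)/2) * (x - p)))⁻¹ := h4
      _ = (Real.sqrt ((q - p)/2))⁻¹ * (x - p) ^ (-(1/2) : ℝ) := by
          rw [h5, mul_inv, inv_sqrt_eq_rpow (x - p)]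
  -- right piece
  have hright : IntervalIntegrable (fun u => (Real.sqrt ((q - u)*(u - p)))⁻¹) volume m q := by
    have hrpow2 : IntervalIntegrable (fun x : ℝ => x ^ (-(1/2) : ℝ)) volume (q - m) 0 :=
      intervalIntegral.intervalIntegrable_rpow' (by norm_num)
    have hg0 : IntervalIntegrable (fun x : ℝ => (q - x) ^ (-(1/2) : ℝ)) volume m q := by
      have := hrpow2.comp_sub_left q
      simpa using this
    have hg : IntervalIntegrable
        (fun x : ℝ => (Real.sqrt ((q - p)/2))⁻¹ * (q - x) ^ (-(1/2) : ℝ)) volume m q :=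
      hg0.const_mul _
    refine hg.mono_fun' hmeas.aestronglyMeasurable ?_
    rw [Set.uIoc_of_le hmq.le]
    refine (MeasureTheory.ae_restrict_iff' measurableSet_Ioc).2 (Filter.Eventually.of_forall ?_)
    intro x hx
    rcases eq_or_lt_of_le hx.2 with hxq' | hxq'
    · subst hxq'
      simp [Real.sqrt_eq_zero_of_nonpos]
    have hxq : 0 < q - x := sub_pos.2 hxq'
    have hxp : (q - p)/2 ≤ x - p := by
      have : m < x := hx.1
      rw [hm] at this; linarith
    have h1 : (q - x) * ((q - p)/2) ≤ (q - x) * (x - p) :=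
      mul_le_mul_of_nonneg_left hxp hxq.le
    have h2 : Real.sqrt ((q - x) * ((q - p)/2)) ≤ Real.sqrt ((q - x)*(x - p)) :=
      Real.sqrt_le_sqrt h1
    have h3 : (0:ℝ) < Real.sqrt ((q - x) * ((q - p)/2)) := Real.sqrt_pos.2 (by positivity)
    have h4 : (Real.sqrt ((q - x)*(x - p)))⁻¹ ≤ (Real.sqrt ((q - x) * ((q - p)/2)))⁻¹ :=
      inv_anti₀ h3 h2
    have h5 : Real.sqrt ((q - x) * ((q - p)/2)) = Real.sqrt (q - x) * Real.sqrt ((q - p)/2) :=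
      Real.sqrt_mul hxq.le _
    calc ‖(Real.sqrt ((q - x)*(x - p)))⁻¹‖
        = (Real.sqrt ((q - x)*(x - p)))⁻¹ := by
          rw [Real.norm_eq_abs, abs_of_nonneg (by positivity)]
      _ ≤ (Real.sqrt ((q - x) * ((q - p)/2)))⁻¹ := h4
      _ = (Real.sqrt ((q - p)/2))⁻¹ * (q - x) ^ (-(1/2) : ℝ) := by
          rw [h5, mul_inv, inv_sqrt_eq_rpow (q - x)]; ring
  exact hleft.trans hright

lemma model_integral {p q : ℝ} (hpq : p < q) :
    ∫ u in p..q, (Real.sqrt ((q - u)*(u - p)))⁻¹ = π := by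
  have hqp : (0:ℝ) < q - p := sub_pos.2 hpq
  have hcont : ContinuousOn (fun v => Real.arcsin ((2*v - p - q)/(q - p))) (Set.Icc p q) :=
    (Real.continuous_arcsin.comp (by fun_prop)).continuousOn
  have := intervalIntegral.integral_eq_sub_of_hasDeriv_right_of_le hpq.le hcont
    (fun x hx => (model_hasDerivAt hpq hx).hasDerivWithinAt) (model_integrable hpq)
  rw [this]
  rw [show (2*q - p - q)/(q - p) = 1 from by field_simp; ring,
      show (2*p - p - q)/(q - p) = -1 from by field_simp; ring,
      Real.arcsin_one, Real.arcsin_neg_one]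
  ring

lemma quad_hasDerivAt (A B C y : ℝ) :
    HasDerivAt (fun u : ℝ => A*u^2 + B*u + C) (2*A*y + B) y := by
  have h1 : HasDerivAt (fun u : ℝ => A*u^2) (A*(2*y^1)) y := by
    simpa using (hasDerivAt_pow 2 y).const_mul A
  have h2 : HasDerivAt (fun u : ℝ => B*u) (B*1) y := (hasDerivAt_id y).const_mul B
  have := (h1.add h2).add_const C
  refine this.congr_deriv ?_
  ring

lemma deriv2_add_quadratic {s : Set ℝ} (hs : IsOpen s) {f : ℝ → ℝ}
    (hf : ContDiffOn ℝ (⊤ : ℕ∞) f s) (A B C : ℝ) {x : ℝ} (hx : x ∈ s) :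
    deriv (deriv (fun u => f u + (A*u^2 + B*u + C))) x = deriv (deriv f) x + 2*A := by
  have hfC : ContDiffOn ℝ (⊤:ℕ∞) (deriv f) s := hf.deriv_of_isOpen hs (by exact_mod_cast le_top)
  have hfd : ∀ y ∈ s, DifferentiableAt ℝ f y := fun y hy =>
    (hf.differentiableOn (by simp)).differentiableAt (hs.mem_nhds hy)
  have heq : Set.EqOn (deriv fun u => f u + (A*u^2 + B*u + C))
      (fun y => deriv f y + (2*A*y + B)) s := fun y hy =>
    (((hfd y hy).hasDerivAt).add (quad_hasDerivAt A B C y)).deriv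
  rw [Filter.EventuallyEq.deriv_eq (heq.eventuallyEq_of_mem (hs.mem_nhds hx))]
  have hdf' : DifferentiableAt ℝ (deriv f) x :=
    ((hfC.differentiableOn (by simp))).differentiableAt (hs.mem_nhds hx)
  have : HasDerivAt (fun y => deriv f y + (2*A*y + B)) (deriv (deriv f) x + 2*A) x := by
    have h2 : HasDerivAt (fun y : ℝ => 2*A*y + B) (2*A*1) x :=
      ((hasDerivAt_id x).const_mul (2*A)).add_const B
    exact (hdf'.hasDerivAt.add h2).congr_deriv (by ring)
  exact this.deriv

lemma convex_aux {s : Set ℝ} (hs : IsOpen s) {f : ℝ → ℝ}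
    (hf : ContDiffOn ℝ (⊤ : ℕ∞) f s) {r q : ℝ} (hsub : Set.Icc r q ⊆ s) (A B C : ℝ)
    (h2 : ∀ x ∈ Set.Ioo r q, 0 ≤ deriv (deriv f) x + 2*A) :
    ConvexOn ℝ (Set.Icc r q) (fun u => f u + (A*u^2 + B*u + C)) := by
  have hfC : ContDiffOn ℝ (⊤:ℕ∞) (deriv f) s := hf.deriv_of_isOpen hs (by exact_mod_cast le_top)
  have hfd : ∀ y ∈ s, DifferentiableAt ℝ f y := fun y hy =>
    (hf.differentiableOn (by simp)).differentiableAt (hs.mem_nhds hy)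
  have hsub' : Set.Ioo r q ⊆ s := fun x hx => hsub (Set.Ioo_subset_Icc_self hx)
  refine convexOn_of_deriv2_nonneg (convex_Icc r q) ?_ ?_ ?_ ?_
  · exact (hf.continuousOn.mono hsub).add (Continuous.continuousOn (by fun_prop))
  · rw [interior_Icc]
    exact fun x hx => ((hfd x (hsub' hx)).add
      (quad_hasDerivAt A B C x).differentiableAt).differentiableWithinAt
  · rw [interior_Icc]
    have hdiff : DifferentiableOn ℝ (fun y => deriv f y + (2*A*y + B)) (Set.Ioo r q) := by
      intro x hx
      have hdf' : DifferentiableAt ℝ (deriv f) x :=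
        ((hfC.differentiableOn (by simp))).differentiableAt
          (hs.mem_nhds (hsub' hx))
      exact (hdf'.add (((hasDerivAt_id x).const_mul (2*A)).add_const B).differentiableAt
        ).differentiableWithinAt
    refine hdiff.congr ?_
    intro y hy
    exact (((hfd y (hsub' hy)).hasDerivAt).add (quad_hasDerivAt A B C y)).deriv
  · rw [interior_Icc]
    intro x hx
    show 0 ≤ deriv (deriv fun u => f u + (A*u^2 + B*u + C)) x
    rw [deriv2_add_quadratic hs hf A B C (hsub' hx)]
    exact h2 x hx

lemma concave_aux {s : Set ℝ} (hs : IsOpen s) {f : ℝ → ℝ}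
    (hf : ContDiffOn ℝ (⊤ : ℕ∞) f s) {r q : ℝ} (hsub : Set.Icc r q ⊆ s) (A B C : ℝ)
    (h2 : ∀ x ∈ Set.Ioo r q, deriv (deriv f) x + 2*A ≤ 0) :
    ConcaveOn ℝ (Set.Icc r q) (fun u => f u + (A*u^2 + B*u + C)) := by
  have hfC : ContDiffOn ℝ (⊤:ℕ∞) (deriv f) s := hf.deriv_of_isOpen hs (by exact_mod_cast le_top)
  have hfd : ∀ y ∈ s, DifferentiableAt ℝ f y := fun y hy =>
    (hf.differentiableOn (by simp)).differentiableAt (hs.mem_nhds hy)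
  have hsub' : Set.Ioo r q ⊆ s := fun x hx => hsub (Set.Ioo_subset_Icc_self hx)
  refine concaveOn_of_deriv2_nonpos (convex_Icc r q) ?_ ?_ ?_ ?_
  · exact (hf.continuousOn.mono hsub).add (Continuous.continuousOn (by fun_prop))
  · rw [interior_Icc]
    exact fun x hx => ((hfd x (hsub' hx)).add
      (quad_hasDerivAt A B C x).differentiableAt).differentiableWithinAt
  · rw [interior_Icc]
    have hdiff : DifferentiableOn ℝ (fun y => deriv f y + (2*A*y + B)) (Set.Ioo r q) := by
      intro x hx
      have hdf' : DifferentiableAt ℝ (deriv f) x :=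
        ((hfC.differentiableOn (by simp))).differentiableAt
          (hs.mem_nhds (hsub' hx))
      exact (hdf'.add (((hasDerivAt_id x).const_mul (2*A)).add_const B).differentiableAt
        ).differentiableWithinAt
    refine hdiff.congr ?_
    intro y hy
    exact (((hfd y (hsub' hy)).hasDerivAt).add (quad_hasDerivAt A B C y)).deriv
  · rw [interior_Icc]
    intro x hx
    show deriv (deriv fun u => f u + (A*u^2 + B*u + C)) x ≤ 0
    rw [deriv2_add_quadratic hs hf A B C (hsub' hx)]
    exact h2 x hx

lemma scaled_model_integral {p q A : ℝ} (hpq : p < q) (hA : 0 < A) :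
    IntervalIntegrable (fun u => (Real.sqrt (A * ((q - u)*(u - p))))⁻¹) volume p q ∧
    ∫ u in p..q, (Real.sqrt (A * ((q - u)*(u - p))))⁻¹ = π * (Real.sqrt A)⁻¹ := by
  have hfun : (fun u : ℝ => (Real.sqrt (A * ((q - u)*(u - p))))⁻¹)
      = fun u => (Real.sqrt A)⁻¹ * (Real.sqrt ((q - u)*(u - p)))⁻¹ := by
    funext u
    rw [Real.sqrt_mul hA.le, mul_inv]
  constructor
  · rw [hfun]; exact (model_integrable hpq).const_mul _
  · rw [hfun, intervalIntegral.integral_const_mul, model_integral hpq]; ring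

lemma key_bounds {s : Set ℝ} (hs : IsOpen s) {f : ℝ → ℝ}
    (hf : ContDiffOn ℝ (⊤ : ℕ∞) f s) {c r q Ap Am : ℝ}
    (hrq : r < q) (hsub : Set.Icc r q ⊆ s) (hAm : 0 < Am) (hAp : 0 < Ap)
    (h2 : ∀ x ∈ Set.Icc r q, -(2*Ap) ≤ deriv (deriv f) x ∧ deriv (deriv f) x ≤ -(2*Am))
    (hfr : f r + c = 0) (hfq : f q + c = 0)
    (hpos : ∀ u, r < u → u < q → 0 < f u + c) :
    π * (Real.sqrt Ap)⁻¹ ≤ (∫ u in r..q, (Real.sqrt (f u + c))⁻¹) ∧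
    (∫ u in r..q, (Real.sqrt (f u + c))⁻¹) ≤ π * (Real.sqrt Am)⁻¹ := by
  -- quadratic comparison: Am * ((q-u)*(u-r)) ≤ f u + c ≤ Ap * ((q-u)*(u-r)) on Icc r q
  have hquad : ∀ A : ℝ, ∀ u : ℝ,
      f u + (A*u^2 + (-(A*(r+q)))*u + (A*(r*q) + c)) = f u + c - A*((q - u)*(u - r)) := by
    intro A u; ring
  have hub : ∀ u ∈ Set.Icc r q, f u + c ≤ Ap * ((q - u)*(u - r)) := by
    have hconv := convex_aux hs hf hsub Ap (-(Ap*(r+q))) (Ap*(r*q) + c)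
      (fun x hx => by
        have := (h2 x (Set.Ioo_subset_Icc_self hx)).1
        linarith)
    intro u hu
    have := hconv.le_on_segment (Set.left_mem_Icc.2 hrq.le) (Set.right_mem_Icc.2 hrq.le)
      (by rwa [segment_eq_Icc hrq.le])
    rw [hquad Ap u, hquad Ap r, hquad Ap q] at this
    have hr0 : f r + c - Ap*((q - r)*(r - r)) = 0 := by rw [hfr]; ring_nf
    have hq0 : f q + c - Ap*((q - q)*(q - r)) = 0 := by rw [hfq]; ring_nf
    rw [hr0, hq0] at this
    simpa using this
  have hlb : ∀ u ∈ Set.Icc r q, Am * ((q - u)*(u - r)) ≤ f u + c := by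
    have hconc := concave_aux hs hf hsub Am (-(Am*(r+q))) (Am*(r*q) + c)
      (fun x hx => by
        have := (h2 x (Set.Ioo_subset_Icc_self hx)).2
        linarith)
    intro u hu
    have := hconc.ge_on_segment (Set.left_mem_Icc.2 hrq.le) (Set.right_mem_Icc.2 hrq.le)
      (by rwa [segment_eq_Icc hrq.le])
    rw [hquad Am u, hquad Am r, hquad Am q] at this
    have hr0 : f r + c - Am*((q - r)*(r - r)) = 0 := by rw [hfr]; ring_nf
    have hq0 : f q + c - Am*((q - q)*(q - r)) = 0 := by rw [hfq]; ring_nf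
    rw [hr0, hq0] at this
    simpa using this
  -- pointwise bounds on the inverse square roots, on Icc
  have hptUB : ∀ u ∈ Set.Icc r q,
      (Real.sqrt (f u + c))⁻¹ ≤ (Real.sqrt (Am * ((q - u)*(u - r))))⁻¹ := by
    intro u hu
    rcases eq_or_lt_of_le hu.1 with h1 | h1
    · rw [← h1, hfr]
      simp
    rcases eq_or_lt_of_le hu.2 with h2' | h2'
    · rw [h2', hfq]
      simp
    have hAmu : 0 < Am * ((q - u)*(u - r)) :=
      mul_pos hAm (mul_pos (sub_pos.2 h2') (sub_pos.2 h1))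
    exact inv_anti₀ (Real.sqrt_pos.2 hAmu) (Real.sqrt_le_sqrt (hlb u hu))
  have hptLB : ∀ u ∈ Set.Icc r q,
      (Real.sqrt (Ap * ((q - u)*(u - r))))⁻¹ ≤ (Real.sqrt (f u + c))⁻¹ := by
    intro u hu
    rcases eq_or_lt_of_le hu.1 with h1 | h1
    · rw [← h1, hfr]
      simp
    rcases eq_or_lt_of_le hu.2 with h2' | h2'
    · rw [h2', hfq]
      simp
    have hposu : 0 < f u + c := hpos u h1 h2'
    exact inv_anti₀ (Real.sqrt_pos.2 hposu) (Real.sqrt_le_sqrt (hub u hu))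
  -- integrability
  obtain ⟨hintM, hvalM⟩ := scaled_model_integral hrq hAm
  obtain ⟨hintP, hvalP⟩ := scaled_model_integral hrq hAp
  have hmid : IntervalIntegrable (fun u => (Real.sqrt (f u + c))⁻¹) volume r q := by
    have hmeas : AEStronglyMeasurable (fun u => (Real.sqrt (f u + c))⁻¹)
        (volume.restrict (Set.uIoc r q)) := by
      rw [Set.uIoc_of_le hrq.le]
      have hIoc : Set.Ioc r q ⊆ s := fun x hx => hsub (Set.Ioc_subset_Icc_self hx)
      have hfa : AEMeasurable f (volume.restrict (Set.Ioc r q)) :=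
        (hf.continuousOn.mono hIoc).aemeasurable measurableSet_Ioc
      exact ((Real.continuous_sqrt.measurable.comp_aemeasurable
        (hfa.add_const c)).inv).aestronglyMeasurable
    refine hintM.mono_fun' hmeas ?_
    rw [Set.uIoc_of_le hrq.le]
    refine (MeasureTheory.ae_restrict_iff' measurableSet_Ioc).2 (Filter.Eventually.of_forall ?_)
    intro x hx
    have hx' : x ∈ Set.Icc r q := Set.Ioc_subset_Icc_self hx
    calc ‖(Real.sqrt (f x + c))⁻¹‖ = (Real.sqrt (f x + c))⁻¹ := by
          rw [Real.norm_eq_abs, abs_of_nonneg (by positivity)]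
      _ ≤ (Real.sqrt (Am * ((q - x)*(x - r))))⁻¹ := hptUB x hx'
  constructor
  · rw [← hvalP]
    exact intervalIntegral.integral_mono_on hrq.le hintP hmid hptLB
  · rw [← hvalM]
    exact intervalIntegral.integral_mono_on hrq.le hmid hintM hptUB

set_option maxHeartbeats 2000000 in
theorem stmt_8 (δ u₀ a : ℝ) (hδ : 0 < δ) (ha : 0 < a) (f : ℝ → ℝ)
    (hf : ContDiffOn ℝ (⊤ : ℕ∞) f (Set.Ioo (u₀ - δ) (u₀ + δ)))
    (hf₀ : f u₀ = 0) (hf₁ : deriv f u₀ = 0) (hf₂ : deriv (deriv f) u₀ = -2 * a)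
    (u₁ u₂ : ℝ → ℝ) (c₀ : ℝ) (hc₀ : 0 < c₀)
    (h : ∀ c : ℝ, 0 < c → c < c₀ →
      u₀ - δ < u₁ c ∧ u₁ c < u₀ ∧ u₀ < u₂ c ∧ u₂ c < u₀ + δ ∧
      f (u₁ c) + c = 0 ∧ f (u₂ c) + c = 0 ∧
      ∀ u : ℝ, u₁ c < u → u < u₂ c → 0 < f u + c) :
    Tendsto (fun c : ℝ => ∫ u in (u₁ c)..(u₂ c), (Real.sqrt (f u + c))⁻¹)
      (nhdsWithin 0 (Set.Ioi 0)) (nhds (π / Real.sqrt a)) := by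
  set s : Set ℝ := Set.Ioo (u₀ - δ) (u₀ + δ) with hsdef
  have hs : IsOpen s := isOpen_Ioo
  have hu₀s : u₀ ∈ s := by constructor <;> linarith
  have hfC2 : ContinuousOn (deriv (deriv f)) s := by
    have h1 : ContDiffOn ℝ (⊤:ℕ∞) (deriv f) s := hf.deriv_of_isOpen hs (by exact_mod_cast le_top)
    have h2 : ContDiffOn ℝ (⊤:ℕ∞) (deriv (deriv f)) s :=
      h1.deriv_of_isOpen hs (by exact_mod_cast le_top)
    exact h2.continuousOn
  have hcontAt : ContinuousAt (deriv (deriv f)) u₀ := hfC2.continuousAt (hs.mem_nhds hu₀s)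
  rw [Metric.tendsto_nhdsWithin_nhds]
  intro ε hε
  -- choose e > 0 small so that the model values are within ε of π/√a
  have hG0 : π * (Real.sqrt (a*(1+(0:ℝ))))⁻¹ = π / Real.sqrt a := by
    norm_num [div_eq_mul_inv]
  have hH0 : π * (Real.sqrt (a*(1-(0:ℝ))))⁻¹ = π / Real.sqrt a := by
    norm_num [div_eq_mul_inv]
  have hsa : Real.sqrt (a*(1+(0:ℝ))) ≠ 0 := by
    refine ne_of_gt (Real.sqrt_pos.2 (by norm_num; exact ha))
  have hsa' : Real.sqrt (a*(1-(0:ℝ))) ≠ 0 := by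
    refine ne_of_gt (Real.sqrt_pos.2 (by norm_num; exact ha))
  have hGcont : ContinuousAt (fun t : ℝ => π * (Real.sqrt (a*(1+t)))⁻¹) 0 := by
    have h1 : ContinuousAt (fun t : ℝ => Real.sqrt (a*(1+t))) 0 := by fun_prop
    exact continuousAt_const.mul (h1.inv₀ hsa)
  have hHcont : ContinuousAt (fun t : ℝ => π * (Real.sqrt (a*(1-t)))⁻¹) 0 := by
    have h1 : ContinuousAt (fun t : ℝ => Real.sqrt (a*(1-t))) 0 := by fun_prop
    exact continuousAt_const.mul (h1.inv₀ hsa')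
  have hGev : ∀ᶠ t in nhds (0:ℝ),
      dist (π * (Real.sqrt (a*(1+t)))⁻¹) (π / Real.sqrt a) < ε := by
    have := Metric.tendsto_nhds.1 hGcont ε hε
    simpa [hG0, div_eq_mul_inv] using this
  have hHev : ∀ᶠ t in nhds (0:ℝ),
      dist (π * (Real.sqrt (a*(1-t)))⁻¹) (π / Real.sqrt a) < ε := by
    have := Metric.tendsto_nhds.1 hHcont ε hε
    simpa [hH0, div_eq_mul_inv] using this
  obtain ⟨w, hw, hball⟩ := Metric.eventually_nhds_iff.1 (hGev.and hHev)
  set e := min (w/2) (1/2) with hedef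
  have he0 : 0 < e := lt_min (by linarith) (by norm_num)
  have he1 : e < 1 := lt_of_le_of_lt (min_le_right _ _) (by norm_num)
  have hew : dist e 0 < w := by
    rw [Real.dist_eq, sub_zero, abs_of_pos he0]
    exact lt_of_le_of_lt (min_le_left _ _) (by linarith)
  obtain ⟨hG, hH⟩ := hball hew
  rw [Real.dist_eq, abs_lt] at hG hH
  set Ap := a*(1+e) with hApdef
  set Am := a*(1-e) with hAmdef
  have hAp : 0 < Ap := by rw [hApdef]; nlinarith
  have hAm : 0 < Am := by rw [hAmdef]; nlinarith
  -- choose η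
  have hae : 0 < 2*a*e := by positivity
  have hev1 : ∀ᶠ x in nhds u₀, x ∈ s := hs.mem_nhds hu₀s
  have hev2 : ∀ᶠ x in nhds u₀, |deriv (deriv f) x - (-2*a)| < 2*a*e := by
    have := Metric.tendsto_nhds.1 hcontAt (2*a*e) hae
    simp only [Real.dist_eq, hf₂] at this
    convert this using 3
  obtain ⟨w', hw', hball'⟩ := Metric.eventually_nhds_iff.1 (hev1.and hev2)
  set η := w'/2 with hηdef
  have hη : 0 < η := by rw [hηdef]; linarith
  have hIcc : ∀ x ∈ Set.Icc (u₀-η) (u₀+η), x ∈ s ∧ |deriv (deriv f) x - (-2*a)| < 2*a*e := by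
    intro x hx
    refine hball' ?_
    rw [Real.dist_eq, abs_lt]
    obtain ⟨hx1, hx2⟩ := hx
    constructor <;> [linarith; linarith]
  have hIccsub : Set.Icc (u₀-η) (u₀+η) ⊆ s := fun x hx => (hIcc x hx).1
  have hfpp : ∀ x ∈ Set.Icc (u₀-η) (u₀+η),
      -(2*Ap) ≤ deriv (deriv f) x ∧ deriv (deriv f) x ≤ -(2*Am) := by
    intro x hx
    have := (hIcc x hx).2
    rw [abs_lt] at this
    constructor
    · rw [hApdef]; nlinarith [this.1]
    · rw [hAmdef]; nlinarith [this.2]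
  -- f' is strictly decreasing on the η-interval; f(u₀±η) < 0
  have hfC1 : ContDiffOn ℝ (⊤:ℕ∞) (deriv f) s := hf.deriv_of_isOpen hs (by exact_mod_cast le_top)
  have hder_cont : ContinuousOn (deriv f) (Set.Icc (u₀-η) (u₀+η)) :=
    hfC1.continuousOn.mono hIccsub
  have hanti : StrictAntiOn (deriv f) (Set.Icc (u₀-η) (u₀+η)) := by
    refine strictAntiOn_of_deriv_neg (convex_Icc _ _) hder_cont ?_
    rw [interior_Icc]
    intro x hx
    have := (hfpp x (Set.Ioo_subset_Icc_self hx)).2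
    nlinarith
  have hu₀Icc : u₀ ∈ Set.Icc (u₀-η) (u₀+η) := by constructor <;> linarith
  have hfL : f (u₀-η) < 0 := by
    have hmono : StrictMonoOn f (Set.Icc (u₀-η) u₀) := by
      refine strictMonoOn_of_deriv_pos (convex_Icc _ _)
        (hf.continuousOn.mono (fun x hx => hIccsub ⟨hx.1, by linarith [hx.2]⟩)) ?_
      rw [interior_Icc]
      intro x hx
      have := hanti ⟨hx.1.le, by linarith [hx.2]⟩ hu₀Icc hx.2
      rw [hf₁] at this
      linarith
    have := hmono (Set.left_mem_Icc.2 (by linarith)) (Set.right_mem_Icc.2 (by linarith))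
      (by linarith)
    rw [hf₀] at this
    exact this
  have hfR : f (u₀+η) < 0 := by
    have hmono : StrictAntiOn f (Set.Icc u₀ (u₀+η)) := by
      refine strictAntiOn_of_deriv_neg (convex_Icc _ _)
        (hf.continuousOn.mono (fun x hx => hIccsub ⟨by linarith [hx.1], hx.2⟩)) ?_
      rw [interior_Icc]
      intro x hx
      have := hanti hu₀Icc ⟨by linarith [hx.1], hx.2.le⟩ hx.1
      rw [hf₁] at this
      linarith
    have := hmono (Set.left_mem_Icc.2 (by linarith)) (Set.right_mem_Icc.2 (by linarith))
      (by linarith)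
    rw [hf₀] at this
    exact this
  refine ⟨min c₀ (min (-f (u₀-η)) (-f (u₀+η))),
    lt_min hc₀ (lt_min (by linarith) (by linarith)), ?_⟩
  intro c hcmem hdistc
  have hc0 : 0 < c := hcmem
  rw [Real.dist_eq, sub_zero, abs_of_pos hc0] at hdistc
  have hcc₀ : c < c₀ := lt_of_lt_of_le hdistc (min_le_left _ _)
  have hcL : c < -f (u₀-η) :=
    lt_of_lt_of_le hdistc ((min_le_right _ _).trans (min_le_left _ _))
  have hcR : c < -f (u₀+η) :=
    lt_of_lt_of_le hdistc ((min_le_right _ _).trans (min_le_right _ _))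
  obtain ⟨hb1, hb2, hb3, hb4, hb5, hb6, hb7⟩ := h c hc0 hcc₀
  have hrη : u₀ - η < u₁ c := by
    by_contra hcon
    push_neg at hcon
    rcases eq_or_lt_of_le hcon with heq | hlt2
    · rw [heq] at hb5
      linarith
    · have := hb7 (u₀-η) hlt2 (by linarith)
      linarith
  have hqη : u₂ c < u₀ + η := by
    by_contra hcon
    push_neg at hcon
    rcases eq_or_lt_of_le hcon with heq | hlt2
    · rw [← heq] at hb6
      linarith
    · have := hb7 (u₀+η) (by linarith) hlt2
      linarith
  have hsub2 : Set.Icc (u₁ c) (u₂ c) ⊆ Set.Icc (u₀-η) (u₀+η) :=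
    Set.Icc_subset_Icc hrη.le hqη.le
  have hkey := key_bounds hs hf (lt_trans hb2 hb3) (fun x hx => hIccsub (hsub2 hx)) hAm hAp
    (fun x hx => hfpp x (hsub2 hx)) hb5 hb6 hb7
  rw [Real.dist_eq, abs_lt]
  constructor
  · have := hkey.1
    rw [hApdef] at this
    linarith [hG.1]
  · have := hkey.2
    rw [hAmdef] at this
    linarith [hH.2]
end

section
/- Fix real numbers s and r with 1 < s < r. Then the function H(p) = (s^{2p} - 1)/(r^{2p} - 1) is strictly decreasing in p on (-∞, 0): for all p₁ < p₂ < 0, one has H(p₁) > H(p₂). -/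
open Real

private lemma expm1_slope {x y : ℝ} (hx : 0 < x) (hxy : x < y) :
    y * (Real.exp x - 1) < x * (Real.exp y - 1) := by
  have hy : 0 < y := hx.trans hxy
  have h := strictConvexOn_exp.secant_strict_mono (a := (0:ℝ))
    (Set.mem_univ _) (Set.mem_univ x) (Set.mem_univ y) hx.ne' hy.ne' hxy
  simp only [Real.exp_zero, sub_zero] at h
  rw [div_lt_div_iff₀ hx hy] at h
  linarith

private lemma key2 {s r q : ℝ} (hs : 1 < s) (hsr : s < r) (hq : 0 < q) :
    Real.log r * (s ^ q - 1) < Real.log s * (r ^ q - 1) := by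
  have hs0 : (0:ℝ) < s := by linarith
  have hr0 : (0:ℝ) < r := by linarith
  have hls : 0 < Real.log s := Real.log_pos hs
  have hlog : Real.log s < Real.log r := Real.log_lt_log hs0 hsr
  have hx : 0 < q * Real.log s := mul_pos hq hls
  have hxy : q * Real.log s < q * Real.log r := by nlinarith
  have h := expm1_slope hx hxy
  rw [show q * Real.log s = Real.log s * q by ring,
      show q * Real.log r = Real.log r * q by ring,
      ← Real.rpow_def_of_pos hs0, ← Real.rpow_def_of_pos hr0] at h
  have h' : q * (Real.log r * (s ^ q - 1)) < q * (Real.log s * (r ^ q - 1)) := by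
    ring_nf at h ⊢; linarith
  exact lt_of_mul_lt_mul_left h' hq.le

private lemma key3 {s r u : ℝ} (hs : 1 < s) (hsr : s < r) (hu : u < 0) :
    s ^ u * Real.log s * 2 * (r ^ u - 1) - (s ^ u - 1) * (r ^ u * Real.log r * 2) < 0 := by
  have hs0 : (0:ℝ) < s := by linarith
  have hr0 : (0:ℝ) < r := by linarith
  set q : ℝ := -u with hqdef
  have hq : 0 < q := by simp [hqdef]; linarith
  have hA0 : (0:ℝ) < s ^ q := Real.rpow_pos_of_pos hs0 q
  have hB0 : (0:ℝ) < r ^ q := Real.rpow_pos_of_pos hr0 q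
  have hsu : s ^ u = (s ^ q)⁻¹ := by
    rw [show u = -q by simp [hqdef], Real.rpow_neg hs0.le]
  have hru : r ^ u = (r ^ q)⁻¹ := by
    rw [show u = -q by simp [hqdef], Real.rpow_neg hr0.le]
  set A : ℝ := s ^ q
  set B : ℝ := r ^ q
  rw [hsu, hru]
  set X : ℝ := A⁻¹ * Real.log s * 2 * (B⁻¹ - 1) - (A⁻¹ - 1) * (B⁻¹ * Real.log r * 2) with hX
  have hmul : X * (A * B) = 2 * (Real.log r * (A - 1) - Real.log s * (B - 1)) := by
    have hA : A⁻¹ * A = 1 := inv_mul_cancel₀ hA0.ne'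
    have hB : B⁻¹ * B = 1 := inv_mul_cancel₀ hB0.ne'
    rw [hX]
    linear_combination (2 * Real.log s * (B⁻¹ * B - B) - 2 * Real.log r) * hA + (2 * Real.log s - 2 * Real.log r * (A⁻¹ * A - A)) * hB
  have hK := key2 hs hsr hq
  have hXab : X * (A * B) < 0 := by rw [hmul]; linarith
  nlinarith [mul_pos hA0 hB0]

theorem stmt_13 (s r : ℝ) (hs : 1 < s) (hsr : s < r) (p₁ p₂ : ℝ)
    (h₁₂ : p₁ < p₂) (h₂ : p₂ < 0) :
    (s ^ (2 * p₂) - 1) / (r ^ (2 * p₂) - 1) <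
      (s ^ (2 * p₁) - 1) / (r ^ (2 * p₁) - 1) := by
  have hs0 : (0:ℝ) < s := by linarith
  have hr0 : (0:ℝ) < r := by linarith
  set f : ℝ → ℝ := fun p => (s ^ (2 * p) - 1) / (r ^ (2 * p) - 1) with hf
  have hder : ∀ p ∈ Set.Iio (0:ℝ), HasDerivAt f
      ((s ^ (2*p) * Real.log s * 2 * (r ^ (2*p) - 1)
        - (s ^ (2*p) - 1) * (r ^ (2*p) * Real.log r * 2)) / (r ^ (2*p) - 1) ^ 2) p := by
    intro p hp
    have hp0 : p < 0 := hp
    have hr1 : r ^ (2*p) < 1 :=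
      Real.rpow_lt_one_of_one_lt_of_neg (by linarith) (by linarith)
    have hne : r ^ (2*p) - 1 ≠ 0 := ne_of_lt (by linarith)
    have h2 : HasDerivAt (fun p : ℝ => 2 * p) 2 p := by
      simpa using (hasDerivAt_id p).const_mul 2
    have hS : HasDerivAt (fun p : ℝ => s ^ (2 * p)) (s ^ (2*p) * Real.log s * 2) p := by
      exact
        (Real.hasStrictDerivAt_const_rpow hs0 (2*p)).hasDerivAt.comp p h2
    have hR : HasDerivAt (fun p : ℝ => r ^ (2 * p)) (r ^ (2*p) * Real.log r * 2) p := by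
      exact
        (Real.hasStrictDerivAt_const_rpow hr0 (2*p)).hasDerivAt.comp p h2
    exact (hS.sub_const 1).div (hR.sub_const 1) hne
  have hanti : StrictAntiOn f (Set.Iio 0) := by
    apply strictAntiOn_of_deriv_neg (convex_Iio 0)
    · intro p hp
      exact (hder p hp).differentiableAt.continuousAt.continuousWithinAt
    · intro p hp
      rw [interior_Iio] at hp
      rw [(hder p hp).deriv]
      apply div_neg_of_neg_of_pos
      · exact key3 hs hsr (by have : p < 0 := hp; linarith)
      · have hp0 : p < 0 := hp
        have hr1 : r ^ (2*p) < 1 :=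
          Real.rpow_lt_one_of_one_lt_of_neg (by linarith) (by linarith)
        have hne : r ^ (2*p) - 1 ≠ 0 := ne_of_lt (by linarith)
        exact pow_two_pos_of_ne_zero hne
  exact hanti (show p₁ ∈ Set.Iio (0:ℝ) by exact lt_trans h₁₂ h₂)
    (show p₂ ∈ Set.Iio (0:ℝ) from h₂) h₁₂
end
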